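/- Set m = h²/c. Then |m⁺ − m| ≤ 4c²(1 + M)( M' + (V₀')² √(c |m⁺|) / (4(1 + V₀)²) ), and likewise |m⁻ + m| ≤ 4c²(1 + M)( M' + (V₀')² √(c |m⁻|) / (4(1 + V₀)²) ). -/

import Mathlib

set_option maxHeartbeats 1000000

private lemma t1_aux (c z A B M M' : ℝ) (hc : 0 < c)
    (hA : 0 ≤ A) (hB : 0 ≤ B) (hMA : A ≤ M) (hMB : B ≤ M)
    (hMVT : |B - A| ≤ M' * (c - z)) :
    |c ^ 2 * ((1 + B) ^ 2 - (1 + A) ^ 2)| ≤ 2 * c ^ 2 * (1 + M) * (M' * (c - z)) := by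
  have e : c ^ 2 * ((1 + B) ^ 2 - (1 + A) ^ 2) = (c ^ 2 * (2 + A + B)) * (B - A) := by ring
  have hp1 : (0:ℝ) < c ^ 2 * (2 + A + B) := by nlinarith
  have hp2 : (0:ℝ) ≤ c ^ 2 * (2 * (1 + M)) := by nlinarith
  rw [e, abs_mul, abs_of_pos hp1]
  nlinarith [mul_le_mul (show c ^ 2 * (2 + A + B) ≤ c ^ 2 * (2 * (1 + M)) by nlinarith) hMVT
    (abs_nonneg (B - A)) hp2, abs_nonneg (B - A)]

private lemma fin_aux (c z A B M M' D : ℝ)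
    (hD : z ^ 2 * (1 + A) ^ 2 - 2 * c ^ 2 * (1 + M) * (M' * (c + z)) ≤ D * c)
    (tri : |c ^ 2 * (1 + B) ^ 2 - (c ^ 2 - z ^ 2) * (1 + A) ^ 2| ≤
      |c ^ 2 * ((1 + B) ^ 2 - (1 + A) ^ 2)| + z ^ 2 * (1 + A) ^ 2)
    (t1 : |c ^ 2 * ((1 + B) ^ 2 - (1 + A) ^ 2)| ≤ 2 * c ^ 2 * (1 + M) * (M' * (c - z))) :
    |c ^ 2 * (1 + B) ^ 2 - (c ^ 2 - z ^ 2) * (1 + A) ^ 2| ≤ (4 * c ^ 2 * (1 + M) * M' + D) * c := by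
  linarith only [tri, t1, hD]

private lemma core_aux (c z A B M M' q a : ℝ) (hc : 0 < c) (hz1 : -c < z) (hz2 : z < c)
    (hA : 0 ≤ A) (hB : 0 ≤ B) (hMA : A ≤ M) (hMB : B ≤ M)
    (hM'0 : 0 ≤ M') (hT : 0 < c ^ 2 - z ^ 2)
    (h1A : (0:ℝ) < 1 + A) (h1B : (0:ℝ) < 1 + B) (h1M : (0:ℝ) < 1 + M)
    (ha0 : 0 ≤ a) (ha2 : a ^ 2 = z ^ 2) (hac : a ≤ c)
    (hTM : a * (1 + A) ≤ (c ^ 2 - z ^ 2) * M')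
    (hz2' : z ^ 2 * (1 + A) ^ 2 = (c ^ 2 - z ^ 2) ^ 2 * q ^ 2) :
    z ^ 2 * (1 + A) ^ 2 * (1 + A) ^ 2 ≤
      c ^ 4 * (1 + M) * (1 + B) * q ^ 2
        + 2 * c ^ 2 * (1 + M) * (M' * (c + z)) * (1 + A) ^ 2 := by
  rcases le_or_gt A B with hAB | hAB
  · -- easy case : A ≤ B
    have p1 : (c ^ 2 - z ^ 2) ^ 2 ≤ (c ^ 2) ^ 2 := by nlinarith [sq_nonneg z]
    have p2 : (1 + A) ^ 2 ≤ (1 + M) * (1 + B) := by nlinarith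
    have h4 : (c ^ 2 - z ^ 2) ^ 2 * (1 + A) ^ 2 ≤ c ^ 4 * (1 + M) * (1 + B) := by
      nlinarith [mul_le_mul p1 p2 (by positivity) (by positivity)]
    have h5 : q ^ 2 * ((c ^ 2 - z ^ 2) ^ 2 * (1 + A) ^ 2) ≤ q ^ 2 * (c ^ 4 * (1 + M) * (1 + B)) :=
      mul_le_mul_of_nonneg_left h4 (sq_nonneg q)
    have hslack : 0 ≤ 2 * c ^ 2 * (1 + M) * (M' * (c + z)) * (1 + A) ^ 2 := by
      have hcz : (0:ℝ) ≤ c + z := by linarith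
      positivity
    nlinarith [h5, hz2', hslack, sq_nonneg (1 + A)]
  · -- case B < A
    have hd : 0 < A - B := by linarith
    have s4 : z ^ 2 * (A - B) * (c - z) ≤ 2 * c ^ 2 * ((c ^ 2 - z ^ 2) * M') := by
      have k1 : a * (A - B) ≤ (c ^ 2 - z ^ 2) * M' := by nlinarith [hTM, mul_nonneg ha0 hB]
      have k2 : a * (c - z) ≤ 2 * c ^ 2 := by
        nlinarith [mul_le_mul_of_nonneg_right hac (by linarith : (0:ℝ) ≤ c - z)]
      have k3 := mul_le_mul k1 k2 (mul_nonneg ha0 (by linarith : (0:ℝ) ≤ c - z))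
        (mul_nonneg hT.le hM'0)
      have k4 : z ^ 2 * (A - B) * (c - z) = a * (A - B) * (a * (c - z)) := by
        rw [← ha2]; ring
      linarith [k3, k4.le, k4.ge]
    have s5 : z ^ 2 * (A - B) ≤ 2 * c ^ 2 * (M' * (c + z)) := by
      have hcz : 0 < c - z := by linarith
      have h : z ^ 2 * (A - B) * (c - z) ≤ 2 * c ^ 2 * (M' * (c + z)) * (c - z) := by
        nlinarith [s4]
      exact le_of_mul_le_mul_right h hcz
    have s1 : z ^ 2 * (1 + A) ^ 2 * (1 + A) ^ 2 ≤ (1 + M) * ((c ^ 2 - z ^ 2) ^ 2 * q ^ 2 * (1 + A)) := by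
      nlinarith [hz2', mul_nonneg (mul_nonneg (sq_nonneg (c ^ 2 - z ^ 2)) (sq_nonneg q)) h1A.le,
        mul_le_mul_of_nonneg_left (show 1 + A ≤ 1 + M by linarith)
          (mul_nonneg (mul_nonneg (sq_nonneg (c ^ 2 - z ^ 2)) (sq_nonneg q)) h1A.le)]
    have s2 : (1 + M) * ((c ^ 2 - z ^ 2) ^ 2 * q ^ 2 * (1 + A)) ≤
        c ^ 4 * (1 + M) * (1 + B) * q ^ 2 + (1 + M) * ((c ^ 2 - z ^ 2) ^ 2 * q ^ 2 * (A - B)) := by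
      nlinarith [mul_nonneg (mul_nonneg (sq_nonneg q) h1B.le) h1M.le, sq_nonneg z,
        mul_nonneg (mul_nonneg h1M.le (sq_nonneg q)) (mul_nonneg h1B.le
          (mul_nonneg (by nlinarith : (0:ℝ) ≤ c ^ 2 + (c ^ 2 - z ^ 2))
            (by nlinarith : (0:ℝ) ≤ c ^ 2 - (c ^ 2 - z ^ 2))))]
    have s3 : (1 + M) * ((c ^ 2 - z ^ 2) ^ 2 * q ^ 2 * (A - B)) ≤
        2 * c ^ 2 * (1 + M) * (M' * (c + z)) * (1 + A) ^ 2 := by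
      have e : (c ^ 2 - z ^ 2) ^ 2 * q ^ 2 * (A - B) = z ^ 2 * (A - B) * (1 + A) ^ 2 := by
        linear_combination (B - A) * hz2'
      rw [e]
      have h := mul_le_mul_of_nonneg_right s5 (sq_nonneg (1 + A))
      nlinarith [h, h1M]
    linarith [s1, s2, s3]

lemma key14 (c z A B M M' q : ℝ) (hc : 0 < c) (hz1 : -c < z) (hz2 : z < c)
    (hA : 0 ≤ A) (hB : 0 ≤ B) (hMA : A ≤ M) (hMB : B ≤ M)
    (hM'q : |q| ≤ M')
    (hMVT : |B - A| ≤ M' * (c - z))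
    (hstat : z * (1 + A) = (c ^ 2 - z ^ 2) * q) :
    |c * (1 + B) ^ 2 - (c ^ 2 - z ^ 2) * (1 + A) ^ 2 / c| ≤
      4 * c ^ 2 * (1 + M) * (M' + q ^ 2 * (c * (1 + B)) / (4 * (1 + A) ^ 2)) := by
  have hT : 0 < c ^ 2 - z ^ 2 := by nlinarith
  have h1A : (0:ℝ) < 1 + A := by linarith
  have h1B : (0:ℝ) < 1 + B := by linarith
  have h1M : (0:ℝ) < 1 + M := by linarith
  have hM'0 : 0 ≤ M' := le_trans (abs_nonneg q) hM'q
  have ha0 : 0 ≤ |z| := abs_nonneg z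
  have ha2 : |z| ^ 2 = z ^ 2 := sq_abs z
  have hac : |z| ≤ c := abs_le.mpr ⟨hz1.le, hz2.le⟩
  have haz : |z| * (1 + A) = (c ^ 2 - z ^ 2) * |q| := by
    have h := congrArg abs hstat
    rwa [abs_mul, abs_mul, abs_of_pos h1A, abs_of_pos hT] at h
  have hTM : |z| * (1 + A) ≤ (c ^ 2 - z ^ 2) * M' := by
    rw [haz]; exact mul_le_mul_of_nonneg_left hM'q hT.le
  have hz2' : z ^ 2 * (1 + A) ^ 2 = (c ^ 2 - z ^ 2) ^ 2 * q ^ 2 := by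
    linear_combination (z * (1 + A) + (c ^ 2 - z ^ 2) * q) * hstat
  have core := core_aux c z A B M M' q |z| hc hz1 hz2 hA hB hMA hMB hM'0 hT h1A h1B h1M
    ha0 ha2 hac hTM hz2'
  have e1 : c * (1 + B) ^ 2 - (c ^ 2 - z ^ 2) * (1 + A) ^ 2 / c
      = (c ^ 2 * (1 + B) ^ 2 - (c ^ 2 - z ^ 2) * (1 + A) ^ 2) / c := by
    field_simp
  have e2 : 4 * c ^ 2 * (1 + M) * (M' + q ^ 2 * (c * (1 + B)) / (4 * (1 + A) ^ 2))
      = 4 * c ^ 2 * (1 + M) * M' + c ^ 3 * (1 + M) * (1 + B) * q ^ 2 / (1 + A) ^ 2 := by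
    field_simp
  rw [e1, e2, abs_div, abs_of_pos hc, div_le_iff₀ hc]
  set D := c ^ 3 * (1 + M) * (1 + B) * q ^ 2 / (1 + A) ^ 2 with hDdef
  clear_value D
  have hD : z ^ 2 * (1 + A) ^ 2 - 2 * c ^ 2 * (1 + M) * (M' * (c + z)) ≤ D * c := by
    rw [hDdef, div_mul_eq_mul_div, le_div_iff₀ (by positivity)]
    linarith [core]
  have tri : |c ^ 2 * (1 + B) ^ 2 - (c ^ 2 - z ^ 2) * (1 + A) ^ 2| ≤
      |c ^ 2 * ((1 + B) ^ 2 - (1 + A) ^ 2)| + z ^ 2 * (1 + A) ^ 2 := by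
    have e : c ^ 2 * (1 + B) ^ 2 - (c ^ 2 - z ^ 2) * (1 + A) ^ 2
        = c ^ 2 * ((1 + B) ^ 2 - (1 + A) ^ 2) + z ^ 2 * (1 + A) ^ 2 := by ring
    rw [e]
    calc |c ^ 2 * ((1 + B) ^ 2 - (1 + A) ^ 2) + z ^ 2 * (1 + A) ^ 2|
        ≤ |c ^ 2 * ((1 + B) ^ 2 - (1 + A) ^ 2)| + |z ^ 2 * (1 + A) ^ 2| := abs_add_le _ _
      _ = |c ^ 2 * ((1 + B) ^ 2 - (1 + A) ^ 2)| + z ^ 2 * (1 + A) ^ 2 := by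
          rw [abs_of_nonneg (show (0:ℝ) ≤ z ^ 2 * (1 + A) ^ 2 by positivity)]
  have t1 := t1_aux c z A B M M' hc hA hB hMA hMB hMVT
  exact fin_aux c z A B M M' D hD tri t1

theorem stmt_14
    (c : ℝ) (hc : 0 < c)
    (V V' V'' : ℝ → ℝ)
    (hV1 : ∀ x ∈ Set.Icc (-c) c, HasDerivAt V (V' x) x)
    (hV2 : ∀ x ∈ Set.Icc (-c) c, HasDerivAt V' (V'' x) x)
    (hV2c : ContinuousOn V'' (Set.Icc (-c) c))
    (hVnn : ∀ x ∈ Set.Icc (-c) c, 0 ≤ V x)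
    (r v : ℝ → ℝ)
    (hr : ∀ x, r x = Real.sqrt (c ^ 2 - x ^ 2))
    (hv : ∀ x, v x = r x * (1 + V x))
    (z₀ : ℝ) (hz₀ : z₀ ∈ Set.Ioo (-c) c)
    (hmax : ∀ x ∈ Set.Icc (-c) c, v x ≤ v z₀)
    (M M' M'' : ℝ)
    (hM : IsLUB (V '' Set.Icc (-c) c) M)
    (hM' : IsLUB ((fun x => |V' x|) '' Set.Icc (-c) c) M')
    (hM'' : IsLUB ((fun x => |V'' x|) '' Set.Icc (-c) c) M'')
    (mp mm : ℝ)
    (hmp : mp = c * (1 + V c) ^ 2)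
    (hmm : mm = -(c * (1 + V (-c)) ^ 2))
    :
    |mp - (v z₀) ^ 2 / c| ≤ 4 * c ^ 2 * (1 + M) * (M' + (V' z₀) ^ 2 * Real.sqrt (c * |mp|) / (4 * (1 + V z₀) ^ 2)) ∧
    |mm + (v z₀) ^ 2 / c| ≤ 4 * c ^ 2 * (1 + M) * (M' + (V' z₀) ^ 2 * Real.sqrt (c * |mm|) / (4 * (1 + V z₀) ^ 2)) := by
  obtain ⟨hz01, hz02⟩ := hz₀
  have hzIcc : z₀ ∈ Set.Icc (-c) c := ⟨hz01.le, hz02.le⟩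
  have hcIcc : c ∈ Set.Icc (-c) c := ⟨by linarith, le_refl c⟩
  have hncIcc : -c ∈ Set.Icc (-c) c := ⟨le_refl _, by linarith⟩
  have hT : 0 < c ^ 2 - z₀ ^ 2 := by nlinarith
  have hVz0 : 0 ≤ V z₀ := hVnn z₀ hzIcc
  have hVc0 : 0 ≤ V c := hVnn c hcIcc
  have hVnc0 : 0 ≤ V (-c) := hVnn (-c) hncIcc
  have h1A : (0:ℝ) < 1 + V z₀ := by linarith
  have hMub : ∀ x ∈ Set.Icc (-c) c, V x ≤ M := fun x hx => hM.1 ⟨x, hx, rfl⟩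
  have hM'ub : ∀ x ∈ Set.Icc (-c) c, |V' x| ≤ M' := fun x hx => hM'.1 ⟨x, hx, rfl⟩
  -- stationarity
  have hrtpos : 0 < Real.sqrt (c ^ 2 - z₀ ^ 2) := Real.sqrt_pos.mpr hT
  have hrtsq : Real.sqrt (c ^ 2 - z₀ ^ 2) ^ 2 = c ^ 2 - z₀ ^ 2 := Real.sq_sqrt hT.le
  have hveq : v = fun x => Real.sqrt (c ^ 2 - x ^ 2) * (1 + V x) := funext fun x => by
    rw [hv, hr]
  have hinner : HasDerivAt (fun x : ℝ => c ^ 2 - x ^ 2) (0 - 2 * z₀) z₀ := by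
    simpa using (hasDerivAt_pow 2 z₀).const_sub (c ^ 2)
  have hdr : HasDerivAt (fun x => Real.sqrt (c ^ 2 - x ^ 2))
      (1 / (2 * Real.sqrt (c ^ 2 - z₀ ^ 2)) * (0 - 2 * z₀)) z₀ :=
    (Real.hasDerivAt_sqrt (ne_of_gt hT)).comp z₀ hinner
  have hdV : HasDerivAt (fun x => 1 + V x) (V' z₀) z₀ := (hV1 z₀ hzIcc).const_add 1
  have hdv : HasDerivAt v
      (1 / (2 * Real.sqrt (c ^ 2 - z₀ ^ 2)) * (0 - 2 * z₀) * (1 + V z₀)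
        + Real.sqrt (c ^ 2 - z₀ ^ 2) * V' z₀) z₀ := by
    rw [hveq]; exact hdr.mul hdV
  have hmax' : ∀ x, v x ≤ v z₀ := by
    intro x
    by_cases hx : x ∈ Set.Icc (-c) c
    · exact hmax x hx
    · have hxout : c ^ 2 - x ^ 2 ≤ 0 := by
        simp only [Set.mem_Icc, not_and_or, not_le] at hx
        rcases hx with h | h <;> nlinarith
      have hvx : v x = 0 := by
        rw [hv, hr, Real.sqrt_eq_zero_of_nonpos hxout, zero_mul]
      rw [hvx, hv z₀, hr z₀]
      positivity
  have hloc : IsLocalMax v z₀ := Filter.Eventually.of_forall hmax'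
  have hder0 : 1 / (2 * Real.sqrt (c ^ 2 - z₀ ^ 2)) * (0 - 2 * z₀) * (1 + V z₀)
      + Real.sqrt (c ^ 2 - z₀ ^ 2) * V' z₀ = 0 := hloc.hasDerivAt_eq_zero hdv
  have hne : Real.sqrt (c ^ 2 - z₀ ^ 2) ≠ 0 := hrtpos.ne'
  have hstat : z₀ * (1 + V z₀) = (c ^ 2 - z₀ ^ 2) * V' z₀ := by
    field_simp at hder0
    linear_combination (-1/2 : ℝ) * hder0 + V' z₀ * hrtsq
  -- MVT bounds
  have hderivW : ∀ x ∈ Set.Icc (-c) c, HasDerivWithinAt V (V' x) (Set.Icc (-c) c) x :=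
    fun x hx => (hV1 x hx).hasDerivWithinAt
  have hbound : ∀ x ∈ Set.Icc (-c) c, ‖V' x‖ ≤ M' := fun x hx => by
    rw [Real.norm_eq_abs]; exact hM'ub x hx
  have mvt1 : |V c - V z₀| ≤ M' * (c - z₀) := by
    have h := (convex_Icc (-c) c).norm_image_sub_le_of_norm_hasDerivWithin_le
      hderivW hbound hzIcc hcIcc
    rwa [Real.norm_eq_abs, Real.norm_eq_abs, abs_of_pos (by linarith : (0:ℝ) < c - z₀)] at h
  have mvt2 : |V (-c) - V z₀| ≤ M' * (c - -z₀) := by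
    have h := (convex_Icc (-c) c).norm_image_sub_le_of_norm_hasDerivWithin_le
      hderivW hbound hzIcc hncIcc
    rw [Real.norm_eq_abs, Real.norm_eq_abs] at h
    have e : |-c - z₀| = c - -z₀ := by
      rw [abs_of_neg (by linarith : -c - z₀ < 0)]; ring
    rwa [e] at h
  -- sqrt simplifications
  have hv2 : (v z₀) ^ 2 = (c ^ 2 - z₀ ^ 2) * (1 + V z₀) ^ 2 := by
    rw [hv, hr, mul_pow, hrtsq]
  have hsqmp : Real.sqrt (c * |mp|) = c * (1 + V c) := by
    rw [hmp, abs_of_nonneg (by positivity : (0:ℝ) ≤ c * (1 + V c) ^ 2)]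
    have e : c * (c * (1 + V c) ^ 2) = (c * (1 + V c)) ^ 2 := by ring
    rw [e, Real.sqrt_sq (by positivity : (0:ℝ) ≤ c * (1 + V c))]
  have hsqmm : Real.sqrt (c * |mm|) = c * (1 + V (-c)) := by
    rw [hmm, abs_neg, abs_of_nonneg (by positivity : (0:ℝ) ≤ c * (1 + V (-c)) ^ 2)]
    have e : c * (c * (1 + V (-c)) ^ 2) = (c * (1 + V (-c))) ^ 2 := by ring
    rw [e, Real.sqrt_sq (by positivity : (0:ℝ) ≤ c * (1 + V (-c)))]
  constructor
  · rw [hsqmp, hmp, hv2]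
    exact key14 c z₀ (V z₀) (V c) M M' (V' z₀) hc hz01 hz02 hVz0 hVc0
      (hMub z₀ hzIcc) (hMub c hcIcc) (hM'ub z₀ hzIcc) mvt1 hstat
  · rw [hsqmm, hmm, hv2]
    have e : -(c * (1 + V (-c)) ^ 2) + (c ^ 2 - z₀ ^ 2) * (1 + V z₀) ^ 2 / c
        = -(c * (1 + V (-c)) ^ 2 - (c ^ 2 - z₀ ^ 2) * (1 + V z₀) ^ 2 / c) := by ring
    rw [e, abs_neg]
    have hstat' : -z₀ * (1 + V z₀) = (c ^ 2 - (-z₀) ^ 2) * (-(V' z₀)) := by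
      linear_combination -hstat
    have hq' : |(-(V' z₀))| ≤ M' := by rw [abs_neg]; exact hM'ub z₀ hzIcc
    have h := key14 c (-z₀) (V z₀) (V (-c)) M M' (-(V' z₀)) hc (by linarith) (by linarith)
      hVz0 hVnc0 (hMub z₀ hzIcc) (hMub (-c) hncIcc) hq' mvt2 hstat'
    simpa only [neg_sq, neg_neg] using h
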